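/- Let n ≥ 1, let 0 < β ≤ 1/2, 0 < δ ≤ 1/2 and c > 0, and let π : ℝⁿ → ℝ be a measurable function satisfying 0 ≤ π(y) ≤ c(‖y‖^{-n-2β} + ‖y‖^{-n-2δ}) for all y ≠ 0. Then there exists a constant C > 0, depending only on n, β, δ and c, such that for every ξ ∈ ℝⁿ one has ∫_{ℝⁿ} (1 − cos⟨ξ, y⟩) π(y) dy ≤ C (‖ξ‖^{2β} + ‖ξ‖^{2δ}). -/

import Mathlib

open MeasureTheory Metric
open scoped ENNReal RealInnerProductSpace

private lemma one_sub_cos_le_half_sq (x : ℝ) : 1 - Real.cos x ≤ x ^ 2 / 2 := by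
  have h := Real.abs_sin_half x
  have h2 : Real.sin (x/2)^2 = (1 - Real.cos x)/2 := by
    rw [← sq_abs, h, Real.sq_sqrt]
    nlinarith [Real.cos_le_one x]
  nlinarith [pow_le_pow_left₀ (abs_nonneg (Real.sin (x/2))) (Real.abs_sin_le_abs (x := x/2)) 2,
    sq_abs (Real.sin (x/2)), sq_abs (x/2)]

private lemma geom_of_ratio {d : ℕ → ℝ} {r : ℝ}
    (h : ∀ k, d (k+1) = r * d k) : ∀ k, d k = r ^ k * d 0 := by
  intro k
  induction k with
  | zero => simp
  | succ k ih => rw [h, ih, pow_succ]; ring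

set_option maxHeartbeats 1000000 in
/-- Core radial estimate:
`∫ min(2, t²‖y‖²/2) ‖y‖^(-n-2α) dy ≤ D t^(2α)` for some finite `D`. -/
private lemma core_radial (n : ℕ) (hn : 1 ≤ n) (α : ℝ) (hα0 : 0 < α) (hα : α ≤ 1/2) :
    ∃ D : ℝ≥0∞, D ≠ ⊤ ∧ ∀ t : ℝ, 0 < t →
      (∫⁻ y : EuclideanSpace ℝ (Fin n),
          ENNReal.ofReal (min 2 (t ^ 2 * ‖y‖ ^ 2 / 2)) *
            ENNReal.ofReal (‖y‖ ^ (-(n : ℝ) - 2 * α)))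
        ≤ D * ENNReal.ofReal (t ^ (2 * α)) := by
  haveI : NeZero n := ⟨by omega⟩
  set E := EuclideanSpace ℝ (Fin n) with hE
  set p : ℝ := -(n : ℝ) - 2 * α with hpdef
  have hp0 : p ≤ 0 := by
    have : (0:ℝ) ≤ n := Nat.cast_nonneg n
    simp only [hpdef]; linarith
  have hpn : p + (n : ℝ) = -(2 * α) := by simp only [hpdef]; ring
  set B : ℝ≥0∞ := volume (ball (0 : E) 1) with hBdef
  have hBtop : B ≠ ⊤ := measure_ball_lt_top.ne
  set rin : ℝ := (1/2 : ℝ) ^ ((2:ℝ) - 2 * α) with hrin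
  set rout : ℝ := (2 : ℝ) ^ (p + (n:ℝ)) with hrout
  have hrin0 : 0 ≤ rin := Real.rpow_nonneg (by norm_num) _
  have hrout0 : 0 ≤ rout := Real.rpow_nonneg (by norm_num) _
  have hrin1 : rin < 1 := by
    apply Real.rpow_lt_one (by norm_num) (by norm_num)
    linarith
  have hrout1 : rout < 1 := by
    apply Real.rpow_lt_one_of_one_lt_of_neg one_lt_two
    rw [hpn]; linarith
  set Cin : ℝ := (1/2 : ℝ) * (1/2 : ℝ) ^ p with hCin
  set Cout : ℝ := 2 * (2 : ℝ) ^ (n:ℝ) with hCout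
  have hCin0 : 0 ≤ Cin := by
    have := Real.rpow_nonneg (by norm_num : (0:ℝ) ≤ 1/2) p
    simp only [hCin]; positivity
  have hCout0 : 0 ≤ Cout := by
    have := Real.rpow_nonneg (by norm_num : (0:ℝ) ≤ 2) (n:ℝ)
    simp only [hCout]; positivity
  have hinvin : (1 - ENNReal.ofReal rin)⁻¹ ≠ ⊤ := by
    rw [ENNReal.inv_ne_top]
    exact (tsub_pos_of_lt (ENNReal.ofReal_lt_one.2 hrin1)).ne'
  have hinvout : (1 - ENNReal.ofReal rout)⁻¹ ≠ ⊤ := by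
    rw [ENNReal.inv_ne_top]
    exact (tsub_pos_of_lt (ENNReal.ofReal_lt_one.2 hrout1)).ne'
  refine ⟨((1 - ENNReal.ofReal rin)⁻¹ * ENNReal.ofReal Cin
      + (1 - ENNReal.ofReal rout)⁻¹ * ENNReal.ofReal Cout) * B, ?_, ?_⟩
  · exact ENNReal.mul_ne_top
      (ENNReal.add_ne_top.2 ⟨ENNReal.mul_ne_top hinvin ENNReal.ofReal_ne_top,
        ENNReal.mul_ne_top hinvout ENNReal.ofReal_ne_top⟩) hBtop
  intro t ht
  set R : ℝ := t⁻¹ with hRdef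
  have hR : 0 < R := inv_pos.2 ht
  set f : E → ℝ≥0∞ := fun y =>
    ENNReal.ofReal (min 2 (t ^ 2 * ‖y‖ ^ 2 / 2)) * ENNReal.ofReal (‖y‖ ^ p) with hf
  -- volume of closed balls
  have hcb : ∀ b : ℝ, 0 ≤ b →
      volume (closedBall (0 : E) b) = ENNReal.ofReal (b ^ (n:ℝ)) * B := by
    intro b hb
    rw [Measure.addHaar_closedBall _ _ hb, finrank_euclideanSpace_fin, Real.rpow_natCast]
  -- basic facts about t, R
  have htR : t ^ 2 * R ^ 2 = 1 := by
    rw [hRdef]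
    field_simp
  have hRpn : R ^ p * R ^ (n:ℝ) = t ^ (2 * α) := by
    rw [← Real.rpow_add hR, hpn, hRdef, Real.inv_rpow ht.le, Real.rpow_neg ht.le, inv_inv]
  -- the basic annulus estimate
  have key : ∀ a b : ℝ, 0 < a → a ≤ b →
      ∫⁻ y in closedBall (0 : E) b \ closedBall 0 a, f y
        ≤ ENNReal.ofReal (min 2 (t ^ 2 * b ^ 2 / 2) * a ^ p * b ^ (n:ℝ)) * B := by
    intro a b ha hab
    have hb : 0 < b := ha.trans_le hab
    have hmin0 : (0:ℝ) ≤ min 2 (t ^ 2 * b ^ 2 / 2) := le_min (by norm_num) (by positivity)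
    calc
      ∫⁻ y in closedBall (0 : E) b \ closedBall 0 a, f y
          ≤ ∫⁻ _ in closedBall (0 : E) b \ closedBall 0 a,
              ENNReal.ofReal (min 2 (t ^ 2 * b ^ 2 / 2) * a ^ p) := by
        apply setLIntegral_mono measurable_const
        intro y hy
        obtain ⟨hy1, hy2⟩ := hy
        rw [mem_closedBall, dist_zero_right] at hy1
        rw [mem_closedBall, dist_zero_right, not_le] at hy2
        have h1 : min 2 (t ^ 2 * ‖y‖ ^ 2 / 2) ≤ min 2 (t ^ 2 * b ^ 2 / 2) := by
          apply min_le_min le_rfl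
          have h0 : ‖y‖ ^ 2 ≤ b ^ 2 := by nlinarith [norm_nonneg y]
          have := mul_le_mul_of_nonneg_left h0 (sq_nonneg t)
          linarith
        have h2 : ‖y‖ ^ p ≤ a ^ p := Real.rpow_le_rpow_of_nonpos ha hy2.le hp0
        rw [hf, ENNReal.ofReal_mul hmin0]
        exact mul_le_mul' (ENNReal.ofReal_le_ofReal h1) (ENNReal.ofReal_le_ofReal h2)
      _ = ENNReal.ofReal (min 2 (t ^ 2 * b ^ 2 / 2) * a ^ p) *
            volume (closedBall (0 : E) b \ closedBall 0 a) := setLIntegral_const _ _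
      _ ≤ ENNReal.ofReal (min 2 (t ^ 2 * b ^ 2 / 2) * a ^ p) *
            volume (closedBall (0 : E) b) :=
        mul_le_mul_right (measure_mono Set.diff_subset) _
      _ = ENNReal.ofReal (min 2 (t ^ 2 * b ^ 2 / 2) * a ^ p * b ^ (n:ℝ)) * B := by
        rw [hcb b hb.le, ← mul_assoc, ← ENNReal.ofReal_mul (by positivity)]
  -- annuli
  set A : ℕ → Set E := fun k =>
    closedBall (0 : E) (R * (1/2 : ℝ) ^ k) \ closedBall 0 (R * (1/2 : ℝ) ^ (k+1)) with hA
  set A' : ℕ → Set E := fun k =>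
    closedBall (0 : E) (R * (2 : ℝ) ^ (k+1)) \ closedBall 0 (R * (2 : ℝ) ^ k) with hA'
  -- covering
  have cover : (Set.univ : Set E) ⊆ {0} ∪ ((⋃ k, A k) ∪ (⋃ k, A' k)) := by
    intro y _
    by_cases hy0 : y = 0
    · exact Or.inl hy0
    right
    have hy : 0 < ‖y‖ := norm_pos_iff.2 hy0
    by_cases hyR : ‖y‖ ≤ R
    · left
      have hex : ∃ k, R * (1/2 : ℝ) ^ (k+1) < ‖y‖ := by
        obtain ⟨m, hm⟩ := exists_pow_lt_of_lt_one (div_pos hy hR) (by norm_num : (1/2:ℝ) < 1)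
        refine ⟨m, ?_⟩
        have h1 := (lt_div_iff₀ hR).1 hm
        have h2 : R * (1/2 : ℝ) ^ (m+1) ≤ (1/2 : ℝ) ^ m * R := by
          have hnn : (0:ℝ) ≤ (1/2 : ℝ) ^ m * R := by positivity
          have heq : R * (1/2 : ℝ) ^ (m+1) = (1/2) * ((1/2 : ℝ) ^ m * R) := by ring
          linarith
        exact lt_of_le_of_lt h2 h1
      set k := Nat.find hex with hk
      have hlow : R * (1/2 : ℝ) ^ (k+1) < ‖y‖ := Nat.find_spec hex
      have hup : ‖y‖ ≤ R * (1/2 : ℝ) ^ k := by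
        rcases Nat.eq_zero_or_pos k with h0 | hpos
        · rw [h0]; simpa using hyR
        · obtain ⟨j, hj⟩ := Nat.exists_eq_add_of_lt hpos
          have := Nat.find_min hex (m := j) (by omega)
          rw [not_lt] at this
          have hjk : j + 1 = k := by omega
          rwa [hjk] at this
      refine Set.mem_iUnion.2 ⟨k, ?_, ?_⟩
      · rwa [mem_closedBall, dist_zero_right]
      · rw [mem_closedBall, dist_zero_right, not_le]; exact hlow
    · right
      rw [not_le] at hyR
      have hex : ∃ k, ‖y‖ ≤ R * (2:ℝ) ^ (k+1) := by
        obtain ⟨m, hm⟩ := pow_unbounded_of_one_lt (‖y‖ / R) (one_lt_two (α := ℝ))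
        refine ⟨m, ?_⟩
        have h1 := (div_lt_iff₀ hR).1 hm
        have hnn : (0:ℝ) ≤ (2:ℝ) ^ m * R := by positivity
        have heq : R * (2:ℝ) ^ (m+1) = (2:ℝ) ^ m * R + (2:ℝ) ^ m * R := by ring
        calc ‖y‖ ≤ (2:ℝ) ^ m * R := by linarith
          _ ≤ R * (2:ℝ) ^ (m+1) := by linarith
      set k := Nat.find hex with hk
      have hup : ‖y‖ ≤ R * (2:ℝ) ^ (k+1) := Nat.find_spec hex
      have hlow : R * (2:ℝ) ^ k < ‖y‖ := by
        rcases Nat.eq_zero_or_pos k with h0 | hpos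
        · rw [h0]; simpa using hyR
        · obtain ⟨j, hj⟩ := Nat.exists_eq_add_of_lt hpos
          have := Nat.find_min hex (m := j) (by omega)
          rw [not_le] at this
          have hjk : j + 1 = k := by omega
          rwa [hjk] at this
      refine Set.mem_iUnion.2 ⟨k, ?_, ?_⟩
      · rwa [mem_closedBall, dist_zero_right]
      · rw [mem_closedBall, dist_zero_right, not_le]; exact hlow
  -- the inner geometric bound
  set e : ℕ → ℝ := fun k =>
    t ^ 2 * (R * (1/2:ℝ) ^ k) ^ 2 / 2 * ((R * (1/2:ℝ) ^ (k+1)) ^ p)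
      * ((R * (1/2:ℝ) ^ k) ^ (n:ℝ)) with he
  have hxpos : ∀ k : ℕ, (0:ℝ) < R * (1/2:ℝ) ^ k := fun k => by positivity
  have heratio : ∀ k, e (k+1) = rin * e k := by
    intro k
    have hq : ((1/2:ℝ)) ^ p * ((1/2:ℝ)) ^ (n:ℝ) * ((1/2:ℝ)) ^ (2:ℕ) = rin := by
      rw [← Real.rpow_natCast (1/2:ℝ) 2, ← Real.rpow_add (by norm_num),
        ← Real.rpow_add (by norm_num), hrin]
      congr 1
      rw [hpdef]; push_cast; ring
    have c1 : (R * (1/2:ℝ) ^ (k+1+1)) ^ p = (R * (1/2:ℝ) ^ (k+1)) ^ p * (1/2:ℝ) ^ p := by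
      rw [show R * (1/2:ℝ) ^ (k+1+1) = (R * (1/2:ℝ) ^ (k+1)) * (1/2) by ring,
        Real.mul_rpow (hxpos (k+1)).le (by norm_num)]
    have c2 : (R * (1/2:ℝ) ^ (k+1)) ^ ((n:ℝ)) = (R * (1/2:ℝ) ^ k) ^ (n:ℝ) * (1/2:ℝ) ^ (n:ℝ) := by
      rw [show R * (1/2:ℝ) ^ (k+1) = (R * (1/2:ℝ) ^ k) * (1/2) by ring,
        Real.mul_rpow (hxpos k).le (by norm_num)]
    simp only [he]
    rw [c1, c2, ← hq]
    ring
  have hek : ∀ k, e k = rin ^ k * e 0 := geom_of_ratio heratio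
  have he0 : e 0 = Cin * t ^ (2 * α) := by
    have : e 0 = (t ^ 2 * R ^ 2) * (1/2) * ((1/2:ℝ) ^ p) * (R ^ p * R ^ (n:ℝ)) := by
      simp only [he, pow_zero, mul_one, zero_add, pow_one]
      rw [Real.mul_rpow hR.le (by norm_num : (0:ℝ) ≤ 1/2)]
      ring
    rw [this, htR, hRpn, hCin]
    ring
  have he_nonneg : ∀ k, 0 ≤ e k := by
    intro k
    rw [hek k, he0]
    positivity
  -- the outer geometric bound
  set e' : ℕ → ℝ := fun k =>
    2 * ((R * (2:ℝ) ^ k) ^ p) * ((R * (2:ℝ) ^ (k+1)) ^ (n:ℝ)) with he'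
  have hx'pos : ∀ k : ℕ, (0:ℝ) < R * (2:ℝ) ^ k := fun k => by positivity
  have he'ratio : ∀ k, e' (k+1) = rout * e' k := by
    intro k
    have hq : ((2:ℝ)) ^ p * ((2:ℝ)) ^ (n:ℝ) = rout := by
      rw [← Real.rpow_add (by norm_num), hrout]
    have c1 : (R * (2:ℝ) ^ (k+1)) ^ p = (R * (2:ℝ) ^ k) ^ p * (2:ℝ) ^ p := by
      rw [show R * (2:ℝ) ^ (k+1) = (R * (2:ℝ) ^ k) * 2 by ring,
        Real.mul_rpow (hx'pos k).le (by norm_num)]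
    have c2 : (R * (2:ℝ) ^ (k+1+1)) ^ ((n:ℝ)) = (R * (2:ℝ) ^ (k+1)) ^ (n:ℝ) * (2:ℝ) ^ (n:ℝ) := by
      rw [show R * (2:ℝ) ^ (k+1+1) = (R * (2:ℝ) ^ (k+1)) * 2 by ring,
        Real.mul_rpow (hx'pos (k+1)).le (by norm_num)]
    simp only [he']
    rw [c1, c2, ← hq]
    ring
  have he'k : ∀ k, e' k = rout ^ k * e' 0 := geom_of_ratio he'ratio
  have he'0 : e' 0 = Cout * t ^ (2 * α) := by
    have : e' 0 = 2 * ((2:ℝ) ^ (n:ℝ)) * (R ^ p * R ^ (n:ℝ)) := by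
      simp only [he', pow_zero, mul_one, zero_add, pow_one]
      rw [Real.mul_rpow hR.le (by norm_num : (0:ℝ) ≤ 2)]
      ring
    rw [this, hRpn, hCout]
  -- per-annulus bounds
  have hAk : ∀ k, ∫⁻ y in A k, f y ≤ ENNReal.ofReal (e k) * B := by
    intro k
    have ha : 0 < R * (1/2:ℝ) ^ (k+1) := hxpos (k+1)
    have hab : R * (1/2:ℝ) ^ (k+1) ≤ R * (1/2:ℝ) ^ k := by
      apply mul_le_mul_of_nonneg_left _ hR.le
      exact pow_le_pow_of_le_one (by norm_num) (by norm_num) (by omega)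
    refine le_trans (key _ _ ha hab) (mul_le_mul_left (ENNReal.ofReal_le_ofReal ?_) B)
    simp only [he]
    have h1 : min 2 (t ^ 2 * (R * (1/2:ℝ) ^ k) ^ 2 / 2) ≤ t ^ 2 * (R * (1/2:ℝ) ^ k) ^ 2 / 2 :=
      min_le_right _ _
    have h2 : (0:ℝ) ≤ (R * (1/2:ℝ) ^ (k+1)) ^ p := Real.rpow_nonneg ha.le _
    have h3 : (0:ℝ) ≤ (R * (1/2:ℝ) ^ k) ^ (n:ℝ) := Real.rpow_nonneg (hxpos k).le _
    exact mul_le_mul_of_nonneg_right (mul_le_mul_of_nonneg_right h1 h2) h3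
  have hA'k : ∀ k, ∫⁻ y in A' k, f y ≤ ENNReal.ofReal (e' k) * B := by
    intro k
    have ha : 0 < R * (2:ℝ) ^ k := hx'pos k
    have hab : R * (2:ℝ) ^ k ≤ R * (2:ℝ) ^ (k+1) := by
      apply mul_le_mul_of_nonneg_left _ hR.le
      exact pow_le_pow_right₀ one_le_two (by omega)
    refine le_trans (key _ _ ha hab) (mul_le_mul_left (ENNReal.ofReal_le_ofReal ?_) B)
    simp only [he']
    have h1 : min 2 (t ^ 2 * (R * (2:ℝ) ^ (k+1)) ^ 2 / 2) ≤ 2 := min_le_left _ _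
    have h2 : (0:ℝ) ≤ (R * (2:ℝ) ^ k) ^ p := Real.rpow_nonneg ha.le _
    have h3 : (0:ℝ) ≤ (R * (2:ℝ) ^ (k+1)) ^ (n:ℝ) := Real.rpow_nonneg (hx'pos (k+1)).le _
    exact mul_le_mul_of_nonneg_right (mul_le_mul_of_nonneg_right h1 h2) h3
  -- sum the geometric series
  have hsumin : ∑' k, ENNReal.ofReal (e k) * B
      ≤ (1 - ENNReal.ofReal rin)⁻¹ * ENNReal.ofReal Cin * ENNReal.ofReal (t ^ (2*α)) * B := by
    have heq : ∀ k : ℕ, ENNReal.ofReal (e k) * B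
        = (ENNReal.ofReal rin) ^ k * (ENNReal.ofReal (e 0) * B) := by
      intro k
      rw [hek k, ENNReal.ofReal_mul (pow_nonneg hrin0 k), ENNReal.ofReal_pow hrin0, mul_assoc]
    rw [tsum_congr heq, ENNReal.tsum_mul_right, ENNReal.tsum_geometric, he0,
      ENNReal.ofReal_mul hCin0]
    apply le_of_eq
    ring
  have hsumout : ∑' k, ENNReal.ofReal (e' k) * B
      ≤ (1 - ENNReal.ofReal rout)⁻¹ * ENNReal.ofReal Cout * ENNReal.ofReal (t ^ (2*α)) * B := by
    have heq : ∀ k : ℕ, ENNReal.ofReal (e' k) * B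
        = (ENNReal.ofReal rout) ^ k * (ENNReal.ofReal (e' 0) * B) := by
      intro k
      rw [he'k k, ENNReal.ofReal_mul (pow_nonneg hrout0 k), ENNReal.ofReal_pow hrout0, mul_assoc]
    rw [tsum_congr heq, ENNReal.tsum_mul_right, ENNReal.tsum_geometric, he'0,
      ENNReal.ofReal_mul hCout0]
    apply le_of_eq
    ring
  -- put everything together
  calc
    ∫⁻ y, f y = ∫⁻ y in Set.univ, f y := (setLIntegral_univ f).symm
    _ ≤ ∫⁻ y in {0} ∪ ((⋃ k, A k) ∪ (⋃ k, A' k)), f y := lintegral_mono_set cover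
    _ ≤ (∫⁻ y in ({0} : Set E), f y)
        + ∫⁻ y in (⋃ k, A k) ∪ (⋃ k, A' k), f y := lintegral_union_le _ _ _
    _ ≤ (∫⁻ y in ({0} : Set E), f y)
        + ((∫⁻ y in ⋃ k, A k, f y) + ∫⁻ y in ⋃ k, A' k, f y) :=
      add_le_add_right (lintegral_union_le _ _ _) _
    _ ≤ 0 + ((∑' k, ∫⁻ y in A k, f y) + ∑' k, ∫⁻ y in A' k, f y) := by
      apply add_le_add
      · rw [setLIntegral_measure_zero _ _ (measure_singleton 0)]
      · exact add_le_add (lintegral_iUnion_le _ _) (lintegral_iUnion_le _ _)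
    _ ≤ (∑' k, ENNReal.ofReal (e k) * B) + ∑' k, ENNReal.ofReal (e' k) * B := by
      rw [zero_add]
      exact add_le_add (ENNReal.tsum_le_tsum hAk) (ENNReal.tsum_le_tsum hA'k)
    _ ≤ (1 - ENNReal.ofReal rin)⁻¹ * ENNReal.ofReal Cin * ENNReal.ofReal (t ^ (2*α)) * B
        + (1 - ENNReal.ofReal rout)⁻¹ * ENNReal.ofReal Cout * ENNReal.ofReal (t ^ (2*α)) * B :=
      add_le_add hsumin hsumout
    _ = ((1 - ENNReal.ofReal rin)⁻¹ * ENNReal.ofReal Cin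
        + (1 - ENNReal.ofReal rout)⁻¹ * ENNReal.ofReal Cout) * B
          * ENNReal.ofReal (t ^ (2 * α)) := by
      ring

set_option maxHeartbeats 1000000 in
/-- Upper bound on the Lévy–Khinchin symbol associated to a kernel `π` dominated by
`c (‖y‖^(-n-2β) + ‖y‖^(-n-2δ))`. -/
theorem levy_symbol_upper_bound
    (n : ℕ) (hn : 1 ≤ n) (β δ c : ℝ)
    (hβ0 : 0 < β) (hβ : β ≤ 1 / 2) (hδ0 : 0 < δ) (hδ : δ ≤ 1 / 2) (hc : 0 < c)
    (π : EuclideanSpace ℝ (Fin n) → ℝ) (hπmeas : Measurable π)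
    (hπ0 : ∀ y, 0 ≤ π y)
    (hπub : ∀ y : EuclideanSpace ℝ (Fin n), y ≠ 0 →
      π y ≤ c * (‖y‖ ^ (-(n : ℝ) - 2 * β) + ‖y‖ ^ (-(n : ℝ) - 2 * δ))) :
    ∃ C : ℝ, 0 < C ∧ ∀ ξ : EuclideanSpace ℝ (Fin n),
      (∫⁻ y, ENNReal.ofReal ((1 - Real.cos ⟪ξ, y⟫) * π y))
        ≤ ENNReal.ofReal (C * (‖ξ‖ ^ (2 * β) + ‖ξ‖ ^ (2 * δ))) := by
  haveI : NeZero n := ⟨by omega⟩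
  obtain ⟨Dβ, hDβ, hβbound⟩ := core_radial n hn β hβ0 hβ
  obtain ⟨Dδ, hDδ, hδbound⟩ := core_radial n hn δ hδ0 hδ
  set D : ℝ≥0∞ := ENNReal.ofReal c * (Dβ + Dδ) + 1 with hD
  have hDtop : D ≠ ⊤ := by
    rw [hD]
    exact ENNReal.add_ne_top.2 ⟨ENNReal.mul_ne_top ENNReal.ofReal_ne_top
      (ENNReal.add_ne_top.2 ⟨hDβ, hDδ⟩), ENNReal.one_ne_top⟩
  refine ⟨D.toReal, ENNReal.toReal_pos (by simp [hD]) hDtop, fun ξ => ?_⟩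
  have hRHS : ENNReal.ofReal (D.toReal * (‖ξ‖ ^ (2 * β) + ‖ξ‖ ^ (2 * δ)))
      = D * (ENNReal.ofReal (‖ξ‖ ^ (2 * β)) + ENNReal.ofReal (‖ξ‖ ^ (2 * δ))) := by
    rw [ENNReal.ofReal_mul ENNReal.toReal_nonneg, ENNReal.ofReal_toReal hDtop,
      ENNReal.ofReal_add (Real.rpow_nonneg (norm_nonneg ξ) _)
        (Real.rpow_nonneg (norm_nonneg ξ) _)]
  rw [hRHS]
  by_cases hξ : ξ = 0
  · subst hξ
    simp only [inner_zero_left, Real.cos_zero, sub_self, zero_mul, ENNReal.ofReal_zero,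
      lintegral_zero]
    exact zero_le
  have ht : 0 < ‖ξ‖ := norm_pos_iff.2 hξ
  set t := ‖ξ‖ with htdef
  -- measurable pieces
  set m : EuclideanSpace ℝ (Fin n) → ℝ≥0∞ := fun y =>
    ENNReal.ofReal (min 2 (t ^ 2 * ‖y‖ ^ 2 / 2)) with hm
  set gβ : EuclideanSpace ℝ (Fin n) → ℝ≥0∞ := fun y =>
    ENNReal.ofReal (‖y‖ ^ (-(n : ℝ) - 2 * β)) with hgβ
  set gδ : EuclideanSpace ℝ (Fin n) → ℝ≥0∞ := fun y =>
    ENNReal.ofReal (‖y‖ ^ (-(n : ℝ) - 2 * δ)) with hgδ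
  have hmmeas : Measurable m := by
    apply Measurable.ennreal_ofReal
    exact (continuous_const.min ((continuous_const.mul
      ((continuous_norm (E := EuclideanSpace ℝ (Fin n))).pow 2)).div_const 2)).measurable
  have hgβmeas : Measurable gβ := by
    have hm1 : Measurable (fun r : ℝ => r ^ (-(n : ℝ) - 2 * β)) := by measurability
    exact (hm1.comp measurable_norm).ennreal_ofReal
  have hgδmeas : Measurable gδ := by
    have hm1 : Measurable (fun r : ℝ => r ^ (-(n : ℝ) - 2 * δ)) := by measurability
    exact (hm1.comp measurable_norm).ennreal_ofReal
  -- pointwise bound off the origin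
  have hae : ∀ᵐ y : EuclideanSpace ℝ (Fin n),
      ENNReal.ofReal ((1 - Real.cos ⟪ξ, y⟫) * π y)
        ≤ ENNReal.ofReal c * (m y * gβ y + m y * gδ y) := by
    have h0 : ∀ᵐ y : EuclideanSpace ℝ (Fin n), y ≠ 0 := by
      rw [ae_iff]
      simp only [ne_eq, not_not, Set.setOf_eq_eq_singleton]
      exact measure_singleton 0
    filter_upwards [h0] with y hy
    have hmin0 : (0:ℝ) ≤ min 2 (t ^ 2 * ‖y‖ ^ 2 / 2) := le_min (by norm_num) (by positivity)
    have hcos : 1 - Real.cos ⟪ξ, y⟫ ≤ min 2 (t ^ 2 * ‖y‖ ^ 2 / 2) := by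
      apply le_min
      · nlinarith [Real.neg_one_le_cos ⟪ξ, y⟫]
      · have h1 := one_sub_cos_le_half_sq ⟪ξ, y⟫
        have h2 : |⟪ξ, y⟫| ≤ ‖ξ‖ * ‖y‖ := abs_real_inner_le_norm ξ y
        have h3 : ⟪ξ, y⟫ ^ 2 ≤ (‖ξ‖ * ‖y‖) ^ 2 := by
          rw [← sq_abs]
          exact pow_le_pow_left₀ (abs_nonneg _) h2 2
        have h4 : (‖ξ‖ * ‖y‖) ^ 2 = ‖ξ‖ ^ 2 * ‖y‖ ^ 2 := mul_pow _ _ _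
        rw [htdef]
        linarith
    have hπy := hπub y hy
    have hreal : (1 - Real.cos ⟪ξ, y⟫) * π y
        ≤ min 2 (t ^ 2 * ‖y‖ ^ 2 / 2) *
            (c * (‖y‖ ^ (-(n : ℝ) - 2 * β) + ‖y‖ ^ (-(n : ℝ) - 2 * δ))) := by
      apply mul_le_mul hcos hπy (hπ0 y) hmin0
    refine le_trans (ENNReal.ofReal_le_ofReal hreal) (le_of_eq ?_)
    rw [ENNReal.ofReal_mul hmin0, ENNReal.ofReal_mul hc.le,
      ENNReal.ofReal_add (Real.rpow_nonneg (norm_nonneg y) _)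
        (Real.rpow_nonneg (norm_nonneg y) _)]
    simp only [hm, hgβ, hgδ]
    ring
  calc
    ∫⁻ y, ENNReal.ofReal ((1 - Real.cos ⟪ξ, y⟫) * π y)
        ≤ ∫⁻ y, ENNReal.ofReal c * (m y * gβ y + m y * gδ y) := lintegral_mono_ae hae
    _ = ENNReal.ofReal c * ((∫⁻ y, m y * gβ y) + ∫⁻ y, m y * gδ y) := by
      rw [lintegral_const_mul (f := fun y => m y * gβ y + m y * gδ y) _ ((hmmeas.mul hgβmeas).add (hmmeas.mul hgδmeas)),
        lintegral_add_left (f := fun y => m y * gβ y) (hmmeas.mul hgβmeas)]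
    _ ≤ ENNReal.ofReal c *
        (Dβ * ENNReal.ofReal (t ^ (2 * β)) + Dδ * ENNReal.ofReal (t ^ (2 * δ))) := by
      apply mul_le_mul_right
      exact add_le_add (hβbound t ht) (hδbound t ht)
    _ ≤ D * (ENNReal.ofReal (t ^ (2 * β)) + ENNReal.ofReal (t ^ (2 * δ))) := by
      rw [hD]
      have h1 : Dβ * ENNReal.ofReal (t ^ (2 * β)) + Dδ * ENNReal.ofReal (t ^ (2 * δ))
          ≤ (Dβ + Dδ) * (ENNReal.ofReal (t ^ (2 * β)) + ENNReal.ofReal (t ^ (2 * δ))) := by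
        rw [add_mul]
        exact add_le_add (mul_le_mul' le_rfl le_self_add)
          (mul_le_mul' le_rfl le_add_self)

      calc
        ENNReal.ofReal c *
            (Dβ * ENNReal.ofReal (t ^ (2 * β)) + Dδ * ENNReal.ofReal (t ^ (2 * δ)))
            ≤ ENNReal.ofReal c * ((Dβ + Dδ)
              * (ENNReal.ofReal (t ^ (2 * β)) + ENNReal.ofReal (t ^ (2 * δ)))) :=
          mul_le_mul_right h1 _
        _ = (ENNReal.ofReal c * (Dβ + Dδ))
              * (ENNReal.ofReal (t ^ (2 * β)) + ENNReal.ofReal (t ^ (2 * δ))) :=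
          (mul_assoc _ _ _).symm
        _ ≤ (ENNReal.ofReal c * (Dβ + Dδ) + 1)
              * (ENNReal.ofReal (t ^ (2 * β)) + ENNReal.ofReal (t ^ (2 * δ))) :=
          mul_le_mul_left le_self_add _
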